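/- Let M be a rank-r spike with tip t and legs {x_i,y_i}, 1 ≤ i ≤ r, and let Z ⊆ S − t with |Z| = r. Then Z is a basis of M if and only if either (i) there exist indices k, ℓ with {x_k,y_k} ⊆ Z, {x_ℓ,y_ℓ} ∩ Z = ∅, and |{x_i,y_i} ∩ Z| = 1 for all i ∉ {k,ℓ}, or (ii) |{x_i,y_i} ∩ Z| = 1 for all 1 ≤ i ≤ r and Z is not a circuit of M. -/

import Mathlib

open Set Matroid

variable {α : Type*}
/-- `C` is a circuit of `M`: a minimal dependent subset of the ground set. -/
def IsCircuitOf (M : Matroid α) (C : Set α) : Prop :=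
  C ⊆ M.E ∧ ¬ M.Indep C ∧ ∀ D, D ⊂ C → M.Indep D

/-- `M` is a rank-`r` spike with tip `t`, legs `{x i, y i}` and extra circuit family
`C3`: the ground set is `{t, x 1, y 1, …, x r, y r}` (all elements distinct), and the
circuits of `M` are exactly the sets `{t, x i, y i}`, the sets `{x i, y i, x j, y j}` for
`i ≠ j`, the members of `C3` (which are transversals of the legs of size `r` avoiding
`t`), and all `(r + 1)`-element subsets of the ground set containing none of these. -/
structure IsSpike (M : Matroid α) (r : ℕ) (t : α) (x y : Fin r → α)
    (C3 : Set (Set α)) : Prop where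
  hr : 3 ≤ r
  inj : Function.Injective fun p : Fin r × Bool => if p.2 then x p.1 else y p.1
  htx : ∀ i, t ≠ x i
  hty : ∀ i, t ≠ y i
  ground : M.E = insert t (⋃ i, {x i, y i})
  hC3 : ∀ C ∈ C3, C ⊆ (⋃ i, {x i, y i}) ∧ C.ncard = r ∧
    ∀ i, (C ∩ {x i, y i}).ncard = 1
  circuits : ∀ C : Set α, IsCircuitOf M C ↔
    (∃ i, C = {t, x i, y i}) ∨
    (∃ i j, i ≠ j ∧ C = ({x i, y i, x j, y j} : Set α)) ∨
    C ∈ C3 ∨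
    (C ⊆ M.E ∧ C.ncard = r + 1 ∧
      (∀ i, ¬ ({t, x i, y i} : Set α) ⊆ C) ∧
      (∀ i j, i ≠ j → ¬ ({x i, y i, x j, y j} : Set α) ⊆ C) ∧
      ∀ C' ∈ C3, ¬ C' ⊆ C)

/-- `SymExchSeq M P L Q` : the list `L` of pairs `(e, f)` records a sequence of feasible
symmetric exchanges transforming the pair of disjoint bases `P` into `Q`. -/
def SymExchSeq (M : Matroid α) : Set α × Set α → List (α × α) → Set α × Set α → Prop
  | P, [], Q => P = Q
  | P, (e, f) :: L, Q =>
      ∃ P' : Set α × Set α, e ∈ P.1 ∧ f ∈ P.2 ∧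
        P'.1 = insert f (P.1 \ {e}) ∧ P'.2 = insert e (P.2 \ {f}) ∧
        M.IsBase P'.1 ∧ M.IsBase P'.2 ∧ SymExchSeq M P' L Q

/-- The total weight of a sequence of symmetric exchanges. -/
def seqWeight (w : α → NNReal) (L : List (α × α)) : NNReal :=
  (L.map fun p => w p.1 + w p.2).sum

/-- The number of times an exchange sequence uses the element `a`. -/
def usesCount [DecidableEq α] (L : List (α × α)) (a : α) : ℕ :=
  (L.map Prod.fst).count a + (L.map Prod.snd).count a


lemma ncard_iUnion_fin : ∀ {n : ℕ} (f : Fin n → Set α), (∀ i, (f i).Finite) →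
    (∀ i j, i ≠ j → Disjoint (f i) (f j)) → (⋃ i, f i).ncard = ∑ i, (f i).ncard := by
  intro n
  induction n with
  | zero => intro f _ _; simp
  | succ n ih =>
    intro f hfin hdisj
    have hU : (⋃ i, f i) = f 0 ∪ ⋃ i : Fin n, f i.succ := by
      ext z
      simp only [Set.mem_iUnion, Set.mem_union]
      exact ⟨fun ⟨i, hi⟩ => by
        rcases Fin.eq_zero_or_eq_succ i with h | ⟨j, rfl⟩
        · exact Or.inl (h ▸ hi)
        · exact Or.inr ⟨j, hi⟩,
        fun h => by rcases h with h | ⟨i, hi⟩; exacts [⟨0, h⟩, ⟨i.succ, hi⟩]⟩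
    have hd : Disjoint (f 0) (⋃ i : Fin n, f i.succ) :=
      Set.disjoint_iUnion_right.mpr fun i => hdisj _ _ (Fin.succ_ne_zero i).symm
    have hUfin : (⋃ i : Fin n, f i.succ).Finite := Set.finite_iUnion fun i => hfin _
    rw [hU, Set.ncard_union_eq hd (hfin 0) hUfin,
      ih _ (fun i => hfin _) (fun i j hij => hdisj _ _ (by simpa using hij)),
      Fin.sum_univ_succ]

lemma arith_spike {r : ℕ} (a : Fin r → ℕ) (hsum : ∑ i, a i = r) (hle : ∀ i, a i ≤ 2)
    (h2 : ∀ i j, a i = 2 → a j = 2 → i = j) :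
    (∀ i, a i = 1) ∨ ∃ k ℓ, k ≠ ℓ ∧ a k = 2 ∧ a ℓ = 0 ∧ ∀ i, i ≠ k → i ≠ ℓ → a i = 1 := by
  have hcard : (Finset.univ : Finset (Fin r)).card = r := by simp
  by_cases hk : ∃ k, a k = 2
  · obtain ⟨k, hk⟩ := hk
    right
    have hl : ∃ ℓ, a ℓ = 0 := by
      by_contra h
      push_neg at h
      have hge : ∀ i, 1 ≤ a i := fun i => Nat.one_le_iff_ne_zero.2 (h i)
      have h1 : (r : ℕ) + 1 ≤ ∑ i, a i := by
        have : ∑ i, (if i = k then 2 else 1) ≤ ∑ i, a i :=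
          Finset.sum_le_sum fun i _ => by
            by_cases hik : i = k
            · simp [hik, hk]
            · simpa [hik] using hge i
        have hsplit : ∑ i : Fin r, (if i = k then 2 else 1) = r + 1 := by
          have h1 : ∑ i : Fin r, (if i = k then 2 else 1)
              = ∑ i : Fin r, ((if i = k then (1:ℕ) else 0) + 1) :=
            Finset.sum_congr rfl fun i _ => by by_cases h : i = k <;> simp [h]
          rw [h1, Finset.sum_add_distrib, Finset.sum_ite_eq']
          simp [hcard, Nat.add_comm]
        omega
      omega
    obtain ⟨ℓ, hℓ⟩ := hl
    have hkl : k ≠ ℓ := fun h => by rw [h, hℓ] at hk; omega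
    refine ⟨k, ℓ, hkl, hk, hℓ, fun m hmk hml => ?_⟩
    by_contra hm
    have hm0 : a m = 0 := by
      have := hle m
      have h2m : a m ≠ 2 := fun h => hmk (h2 m k h hk)
      omega
    have hbound : ∑ i, a i ≤ r - 1 := by
      have e1 : a k + ∑ i ∈ Finset.univ.erase k, a i = ∑ i, a i :=
        Finset.add_sum_erase _ a (Finset.mem_univ k)
      have hℓmem : ℓ ∈ Finset.univ.erase k := by simp [Ne.symm hkl]
      have e2 : a ℓ + ∑ i ∈ (Finset.univ.erase k).erase ℓ, a i = ∑ i ∈ Finset.univ.erase k, a i :=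
        Finset.add_sum_erase _ a hℓmem
      have hmmem : m ∈ (Finset.univ.erase k).erase ℓ := by simp [hmk, hml]
      have e3 : a m + ∑ i ∈ ((Finset.univ.erase k).erase ℓ).erase m, a i
          = ∑ i ∈ (Finset.univ.erase k).erase ℓ, a i :=
        Finset.add_sum_erase _ a hmmem
      have hb : ∑ i ∈ ((Finset.univ.erase k).erase ℓ).erase m, a i
          ≤ (((Finset.univ.erase k).erase ℓ).erase m).card * 1 := by
        refine (Finset.sum_le_card_nsmul _ _ 1 fun i hi => ?_).trans (by simp)
        simp only [Finset.mem_erase] at hi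
        have h2i : a i ≠ 2 := fun h => hi.2.2.1 (h2 i k h hk)
        have := hle i
        omega
      have hc : (((Finset.univ.erase k).erase ℓ).erase m).card = r - 3 := by
        rw [Finset.card_erase_of_mem hmmem, Finset.card_erase_of_mem hℓmem,
          Finset.card_erase_of_mem (Finset.mem_univ k), hcard]
        omega
      have hr3 : 3 ≤ r := by
        have hsub := Finset.card_le_card (Finset.subset_univ ({k, ℓ, m} : Finset (Fin r)))
        rw [hcard] at hsub
        have h3 : ({k, ℓ, m} : Finset (Fin r)).card = 3 := by
          rw [Finset.card_insert_of_notMem (by simp [hkl, Ne.symm hmk]),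
            Finset.card_insert_of_notMem (by simp [Ne.symm hml]), Finset.card_singleton]
        omega
      omega
    omega
  · left
    push_neg at hk
    intro i
    have h1 : ∀ j, a j ≤ 1 := fun j => by have := hle j; have := hk j; omega
    by_contra h
    have hi0 : a i = 0 := by have := h1 i; omega
    have e1 : a i + ∑ j ∈ Finset.univ.erase i, a j = ∑ j, a j :=
      Finset.add_sum_erase _ a (Finset.mem_univ i)
    have hb : ∑ j ∈ Finset.univ.erase i, a j ≤ (Finset.univ.erase i).card * 1 :=
      (Finset.sum_le_card_nsmul _ _ 1 fun j _ => h1 j).trans (by simp)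
    have hc : (Finset.univ.erase i).card = r - 1 := by
      rw [Finset.card_erase_of_mem (Finset.mem_univ i), hcard]
    have hr1 : 1 ≤ r := Fin.pos i
    omega

lemma exists_circuit_of_dep (M : Matroid α) :
    ∀ (n : ℕ) (Z : Set α), Z.Finite → Z.ncard ≤ n → Z ⊆ M.E → ¬ M.Indep Z →
      ∃ C, C ⊆ Z ∧ IsCircuitOf M C := by
  intro n
  induction n with
  | zero =>
    intro Z hfin hcard hE hdep
    have hZ : Z = ∅ := by rw [← Set.ncard_eq_zero hfin]; omega
    rw [hZ] at hdep
    exact absurd M.empty_indep hdep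
  | succ n ih =>
    intro Z hfin hcard hE hdep
    by_cases h : ∀ D, D ⊂ Z → M.Indep D
    · exact ⟨Z, subset_rfl, hE, hdep, h⟩
    · push_neg at h
      obtain ⟨D, hDZ, hD⟩ := h
      obtain ⟨C, hCD, hC⟩ := ih D (hfin.subset hDZ.subset)
        (by have := Set.ncard_lt_ncard hDZ hfin; omega) (hDZ.subset.trans hE) hD
      exact ⟨C, hCD.trans hDZ.subset, hC⟩

/-- Let `M` be a rank-`r` spike with tip `t` and legs `{x i, y i}`, and let
`Z ⊆ S - t` with `|Z| = r`. Then `Z` is a basis of `M` iff either (i) there are indices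
`k, ℓ` with `{x k, y k} ⊆ Z`, `{x ℓ, y ℓ} ∩ Z = ∅` and `|{x i, y i} ∩ Z| = 1` for all
`i ∉ {k, ℓ}`, or (ii) `|{x i, y i} ∩ Z| = 1` for all `i` and `Z` is not a circuit. -/
theorem stmt16 (M : Matroid α) (r : ℕ) (t : α) (x y : Fin r → α) (C3 : Set (Set α))
    (hM : IsSpike M r t x y C3) (Z : Set α) (hZ : Z ⊆ M.E \ {t}) (hZcard : Z.ncard = r) :
    M.IsBase Z ↔
      ((∃ k ℓ : Fin r, ({x k, y k} : Set α) ⊆ Z ∧ Z ∩ {x ℓ, y ℓ} = ∅ ∧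
          ∀ i, i ≠ k → i ≠ ℓ → (Z ∩ {x i, y i}).ncard = 1) ∨
        ((∀ i, (Z ∩ {x i, y i}).ncard = 1) ∧ ¬ IsCircuitOf M Z)) := by
  classical
  obtain ⟨hr, hinj, htx, hty, hground, hC3, hcirc⟩ := hM
  have hxx : ∀ i j, x i = x j → i = j := by
    intro i j h
    have h2 : ((i, true) : Fin r × Bool) = (j, true) := hinj (by simpa using h)
    exact congrArg Prod.fst h2
  have hyy : ∀ i j, y i = y j → i = j := by
    intro i j h
    have h2 : ((i, false) : Fin r × Bool) = (j, false) := hinj (by simpa using h)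
    exact congrArg Prod.fst h2
  have hxyne : ∀ i j, x i ≠ y j := by
    intro i j h
    have h2 : ((i, true) : Fin r × Bool) = (j, false) := hinj (by simpa using h)
    simpa using congrArg Prod.snd h2
  have hxy : ∀ i, x i ≠ y i := fun i => hxyne i i
  have htZ : t ∉ Z := fun h => (hZ h).2 rfl
  have hZE : Z ⊆ M.E := fun z hz => (hZ hz).1
  have hZU : Z ⊆ ⋃ i, {x i, y i} := by
    intro z hz
    have h1 := (hZ hz).1
    rw [hground] at h1
    rcases Set.mem_insert_iff.1 h1 with h | h
    · exact absurd h (hZ hz).2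
    · exact h
  have hfinZ : Z.Finite := Set.finite_of_ncard_ne_zero (by rw [hZcard]; omega)
  have hpairfin : ∀ i, ({x i, y i} : Set α).Finite := fun i => (Set.finite_singleton _).insert _
  have hfina : ∀ i, (Z ∩ {x i, y i}).Finite := fun i => hfinZ.inter_of_left _
  have hpair2 : ∀ i, ({x i, y i} : Set α).ncard = 2 := fun i => Set.ncard_pair (hxy i)
  set a : Fin r → ℕ := fun i => (Z ∩ {x i, y i}).ncard with ha
  have hdisj : ∀ i j, i ≠ j → Disjoint ({x i, y i} : Set α) {x j, y j} := by
    intro i j hij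
    rw [Set.disjoint_left]
    intro z hzi hzj
    simp only [Set.mem_insert_iff, Set.mem_singleton_iff] at hzi hzj
    rcases hzi with rfl | rfl <;> rcases hzj with h | h
    · exact hij (hxx i j h)
    · exact hxyne i j h
    · exact hxyne j i h.symm
    · exact hij (hyy i j h)
  have hsum : ∑ i, a i = r := by
    have hZeq : Z = ⋃ i, Z ∩ {x i, y i} := by
      ext z
      simp only [Set.mem_iUnion, Set.mem_inter_iff]
      constructor
      · intro hz
        have h1 := hZU hz
        simp only [Set.mem_iUnion] at h1
        obtain ⟨i, hi⟩ := h1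
        exact ⟨i, hz, hi⟩
      · rintro ⟨i, hz, _⟩; exact hz
    calc ∑ i, a i = (⋃ i, Z ∩ {x i, y i}).ncard :=
          (ncard_iUnion_fin _ hfina (fun i j hij =>
            (hdisj i j hij).mono Set.inter_subset_right Set.inter_subset_right)).symm
      _ = Z.ncard := by rw [← hZeq]
      _ = r := hZcard
  have hle2 : ∀ i, a i ≤ 2 := by
    intro i
    have h1 := Set.ncard_le_ncard (Set.inter_subset_right (s := Z)) (hpairfin i)
    rwa [hpair2 i] at h1
  have hsub2 : ∀ i, ({x i, y i} : Set α) ⊆ Z ↔ a i = 2 := by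
    intro i
    constructor
    · intro h
      show (Z ∩ {x i, y i}).ncard = 2
      rw [Set.inter_eq_self_of_subset_right h, hpair2]
    · intro h
      have heq : Z ∩ {x i, y i} = {x i, y i} :=
        Set.eq_of_subset_of_ncard_le Set.inter_subset_right
          (by rw [hpair2 i]; exact h.symm.le) (hpairfin i)
      exact heq ▸ Set.inter_subset_left
  have h0 : ∀ i, Z ∩ {x i, y i} = ∅ ↔ a i = 0 := fun i => (Set.ncard_eq_zero (hfina i)).symm
  have hcircC2 : ∀ i j, i ≠ j → IsCircuitOf M ({x i, y i, x j, y j}) :=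
    fun i j hij => (hcirc _).mpr (Or.inr (Or.inl ⟨i, j, hij, rfl⟩))
  have hcircC3 : ∀ C ∈ C3, IsCircuitOf M C :=
    fun C hC => (hcirc _).mpr (Or.inr (Or.inr (Or.inl hC)))
  have hdep_of_circ_sub : ∀ C W, IsCircuitOf M C → C ⊆ W → ¬ M.Indep W :=
    fun C W hC hCW hW => hC.2.1 (hW.subset hCW)
  have hlegsub : ∀ i j, ({x i, y i} : Set α) ⊆ Z → ({x j, y j} : Set α) ⊆ Z →
      ({x i, y i, x j, y j} : Set α) ⊆ Z := by
    intro i j h1 h2 z hz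
    simp only [Set.mem_insert_iff, Set.mem_singleton_iff] at hz
    rcases hz with rfl | rfl | rfl | rfl
    · exact h1 (by simp)
    · exact h1 (by simp)
    · exact h2 (by simp)
    · exact h2 (by simp)
  have hindep_iff : M.Indep Z ↔
      (∀ i j, i ≠ j → ¬ (({x i, y i} : Set α) ⊆ Z ∧ ({x j, y j} : Set α) ⊆ Z)) ∧ Z ∉ C3 := by
    constructor
    · intro hI
      refine ⟨fun i j hij h => ?_, fun hC => ?_⟩
      · exact hdep_of_circ_sub _ _ (hcircC2 i j hij) (hlegsub i j h.1 h.2) hI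
      · exact hdep_of_circ_sub _ _ (hcircC3 Z hC) subset_rfl hI
    · rintro ⟨hno2, hnoC3⟩
      by_contra hdep
      obtain ⟨C, hCZ, hC⟩ := exists_circuit_of_dep M Z.ncard Z hfinZ le_rfl hZE hdep
      rcases (hcirc C).mp hC with ⟨i, rfl⟩ | ⟨i, j, hij, rfl⟩ | hC3' | ⟨_, hcard, _⟩
      · exact htZ (hCZ (by simp))
      · refine hno2 i j hij ⟨fun z hz => hCZ ?_, fun z hz => hCZ ?_⟩
        · simp only [Set.mem_insert_iff, Set.mem_singleton_iff] at hz ⊢; tauto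
        · simp only [Set.mem_insert_iff, Set.mem_singleton_iff] at hz ⊢; tauto
      · have heq : C = Z := Set.eq_of_subset_of_ncard_le hCZ
          (by rw [(hC3 C hC3').2.1, hZcard]) hfinZ
        exact hnoC3 (heq ▸ hC3')
      · have h1 := Set.ncard_le_ncard hCZ hfinZ
        rw [hcard, hZcard] at h1
        omega
  have hbase_iff : M.IsBase Z ↔ M.Indep Z := by
    refine ⟨Matroid.IsBase.indep, fun hI => hI.isBase_of_forall_insert ?_⟩
    intro e he hIns
    have heZ : e ∉ Z := he.2
    have hWE : insert e Z ⊆ M.E := Set.insert_subset he.1 hZE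
    have hWcard : (insert e Z).ncard = r + 1 := by
      rw [Set.ncard_insert_of_notMem heZ hfinZ, hZcard]
    have hWnocirc : ∀ C, IsCircuitOf M C → ¬ C ⊆ insert e Z :=
      fun C hC hCW => hC.2.1 (hIns.subset hCW)
    have hWcirc : IsCircuitOf M (insert e Z) := (hcirc _).mpr (Or.inr (Or.inr (Or.inr
      ⟨hWE, hWcard,
        fun i h => hWnocirc _ ((hcirc _).mpr (Or.inl ⟨i, rfl⟩)) h,
        fun i j hij h => hWnocirc _ (hcircC2 i j hij) h,
        fun C' hC' h => hWnocirc _ (hcircC3 C' hC') h⟩)))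
    exact hWcirc.2.1 hIns
  rw [hbase_iff, hindep_iff]
  constructor
  · rintro ⟨hno2, hnoC3⟩
    have h2u : ∀ i j, a i = 2 → a j = 2 → i = j := by
      intro i j hi hj
      by_contra hij
      exact hno2 i j hij ⟨(hsub2 i).mpr hi, (hsub2 j).mpr hj⟩
    rcases arith_spike a hsum hle2 h2u with hall | ⟨k, ℓ, hkl, hk, hl, hrest⟩
    · right
      refine ⟨hall, fun hCZ => ?_⟩
      rcases (hcirc Z).mp hCZ with ⟨i, heq⟩ | ⟨i, j, hij, heq⟩ | hC3' | ⟨_, hcard, _⟩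
      · exact htZ (by rw [heq]; simp)
      · refine hno2 i j hij ⟨?_, ?_⟩
        · rw [heq]; intro z hz
          simp only [Set.mem_insert_iff, Set.mem_singleton_iff] at hz ⊢; tauto
        · rw [heq]; intro z hz
          simp only [Set.mem_insert_iff, Set.mem_singleton_iff] at hz ⊢; tauto
      · exact hnoC3 hC3'
      · rw [hZcard] at hcard; omega
    · exact Or.inl ⟨k, ℓ, (hsub2 k).mpr hk, (h0 ℓ).mpr hl, fun i hik hil => hrest i hik hil⟩
  · rintro (⟨k, ℓ, hkZ, hlZ, hrest⟩ | ⟨hall, hnc⟩)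
    · have hak : a k = 2 := (hsub2 k).mp hkZ
      have hal : a ℓ = 0 := (h0 ℓ).mp hlZ
      have heqk : ∀ i, a i = 2 → i = k := by
        intro i hi
        by_contra hik
        have hil : i ≠ ℓ := by
          rintro rfl
          rw [hal] at hi
          omega
        have h1 : a i = 1 := hrest i hik hil
        omega
      refine ⟨fun i j hij h => ?_, fun hC3' => ?_⟩
      · have hik : i = k := heqk i ((hsub2 i).mp h.1)
        have hjk : j = k := heqk j ((hsub2 j).mp h.2)
        exact hij (hik.trans hjk.symm)
      · have h1 : a ℓ = 1 := (hC3 Z hC3').2.2 ℓ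
        omega
    · refine ⟨fun i j hij h => ?_, fun hC3' => hnc (hcircC3 Z hC3')⟩
      have h2 : a i = 2 := (hsub2 i).mp h.1
      have h1 : a i = 1 := hall i
      omega
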